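/- Every feasible and stable matching M of the constructed instance I' satisfies: (1) for each i ∈ [r], either M(x_i) = v and M(x̄_i) = b, or M(x̄_i) = v and M(x_i) = b; (2) M(d) = w; (3) every literal student over Y ∪ Ȳ is assigned to v; (4) for each j ∈ [s], d_j ∈ M(v) if and only if exactly two literal students corresponding to literals of C_j are assigned to v. -/
import Mathlib


open scoped Classical

noncomputable section

/-- An SMTI-Diverse instance: students `S`, colleges `C`, types `T`.
Preferences are encoded by rank functions (smaller rank = more preferred);
ties are allowed.  `acc` is the (symmetric) acceptability relation, `tau`
the 0/1 type vectors (encoded as `Bool`), `lq`/`uq` the lower/upper quota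
vectors and `cap` the capacities. -/
structure SMTI (S C T : Type) [Fintype S] [Fintype C] [Fintype T] where
  acc : S → C → Prop
  tau : S → T → Bool
  rankS : S → C → ℕ
  rankC : C → S → ℕ
  lq : C → T → ℕ
  uq : C → T → ℕ
  cap : C → ℕ

namespace SMTI

variable {S C T : Type} [Fintype S] [Fintype C] [Fintype T]

/-- `f : S → Option C` encodes a matching: every assigned college is acceptable. -/
def IsMatching (I : SMTI S C T) (f : S → Option C) : Prop :=
  ∀ u w, f u = some w → I.acc u w

/-- The set `M(w)` of students assigned to college `w`. -/
def assigned (I : SMTI S C T) (f : S → Option C) (w : C) : Finset S :=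
  Finset.univ.filter fun u => f u = some w

/-- The number of students of type `z` assigned to `w`. -/
def typeLoad (I : SMTI S C T) (f : S → Option C) (w : C) (z : T) : ℕ :=
  ∑ u ∈ I.assigned f w, (I.tau u z).toNat

/-- Feasibility: capacities respected and quotas met at all colleges. -/
def Feasible (I : SMTI S C T) (f : S → Option C) : Prop :=
  ∀ w, (I.assigned f w).card ≤ I.cap w ∧
    ∀ z, I.lq w z ≤ I.typeLoad f w z ∧ I.typeLoad f w z ≤ I.uq w z

/-- `u` strictly prefers `w` to its assigned college (in particular if unmatched). -/
def PrefersTo (I : SMTI S C T) (f : S → Option C) (u : S) (w : C) : Prop :=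
  ∀ w', f u = some w' → I.rankS u w < I.rankS u w'

/-- `{u,w}` is a blocking pair of `f` witnessed by `U' ⊆ M(w)`. -/
def BlocksWith (I : SMTI S C T) (f : S → Option C) (u : S) (w : C) (U' : Finset S) : Prop :=
  f u ≠ some w ∧ I.acc u w ∧ I.PrefersTo f u w ∧
  U' ⊆ I.assigned f w ∧
  (∀ u' ∈ U', I.rankC w u < I.rankC w u') ∧
  (I.assigned f w \ U').card + 1 ≤ I.cap w ∧
  ∀ z, I.lq w z ≤ (I.tau u z).toNat + ∑ u' ∈ I.assigned f w \ U', (I.tau u' z).toNat ∧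
    (I.tau u z).toNat + ∑ u' ∈ I.assigned f w \ U', (I.tau u' z).toNat ≤ I.uq w z

/-- `{u,w}` is a blocking pair of `f` (with some witness). -/
def BlockingPair (I : SMTI S C T) (f : S → Option C) (u : S) (w : C) : Prop :=
  ∃ U', I.BlocksWith f u w U'

/-- Stability: no blocking pair at all. -/
def Stable (I : SMTI S C T) (f : S → Option C) : Prop :=
  ∀ u w, ¬ I.BlockingPair f u w

end SMTI

section IPrimeConstruction

/-- A literal: polarity (`true` = positive) and a variable
(`Sum.inl i` = `x_{i+1} ∈ X`, `Sum.inr i` = `y ∈ Y`). -/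
abbrev XLit (r : ℕ) := Bool × (Fin r ⊕ Fin r)

/-- Students of `I'`: literal students `Sum.inl l`; clause students
`d_j = Sum.inr (Sum.inl j)`; special students `d = Sum.inr (Sum.inr 0)`,
`r1 = Sum.inr (Sum.inr 1)`, `r2 = Sum.inr (Sum.inr 2)`, `r3 = Sum.inr (Sum.inr 3)`. -/
abbrev StP (r s : ℕ) := XLit r ⊕ (Fin s ⊕ Fin 4)

/-- Colleges of `I'`: `v = 0`, `w = 1`, `a = 2`, `b = 3`. -/
abbrev ColP := Fin 4

/-- Types of `I'`: variable types (`X` on the left, `Y` on the right),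
clause types, and two special types. -/
abbrev TyP (r s : ℕ) := (Fin r ⊕ Fin r) ⊕ (Fin s ⊕ Fin 2)

/-- Truth value of a literal under assignments `σX`, `σY`. -/
def evalXLit {r : ℕ} (σX σY : Fin r → Bool) (l : XLit r) : Bool :=
  if l.1 then Sum.elim σX σY l.2 else !(Sum.elim σX σY l.2)

/-- Block index of a student in college `v`'s preference list:
`[D] ≻ d ≻ [Y] ≻ [Ȳ] ≻ [X̄] ≻ [X]`. -/
def blockV (r s : ℕ) : StP r s → ℕ
  | Sum.inr (Sum.inl _) => 0
  | Sum.inr (Sum.inr k) => if k = 0 then 1 else 9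
  | Sum.inl (pol, Sum.inr _) => if pol then 2 else 3
  | Sum.inl (pol, Sum.inl _) => if pol then 5 else 4

/-- Block index of a student in college `b`'s preference list:
`r3 ≻ r2 ≻ r1 ≻ [X] ≻ [X̄]`. -/
def blockB (r s : ℕ) : StP r s → ℕ
  | Sum.inr (Sum.inr k) => if k = 3 then 0 else if k = 2 then 1 else if k = 1 then 2 else 9
  | Sum.inl (pol, Sum.inl _) => if pol then 3 else 4
  | _ => 9

/-- `rk` realizes an "arbitrary fixed strict order within the blocks" given by `blk`. -/
def RealizesBlocks {r s : ℕ} (blk : StP r s → ℕ) (rk : StP r s → ℕ) : Prop :=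
  Function.Injective rk ∧ ∀ s1 s2 : StP r s, blk s1 < blk s2 → rk s1 < rk s2

/-- The quota vector of college `v`: `1^r 2^r 3^s 0 0` (both lower and upper). -/
def quotaV (r s : ℕ) : TyP r s → ℕ
  | Sum.inl (Sum.inl _) => 1
  | Sum.inl (Sum.inr _) => 2
  | Sum.inr (Sum.inl _) => 3
  | Sum.inr (Sum.inr _) => 0

/-- The instance `I'` from the Σ₂ᵖ-hardness construction, parameterized by the
clauses `cl` and by arbitrary fixed strict orders `rkV` (for `v`) and `rkB`
(for `b`) within the blocks. -/
def IPrime (r s : ℕ) (cl : Fin s → Fin 3 → XLit r) (rkV rkB : StP r s → ℕ) :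
    SMTI (StP r s) ColP (TyP r s) where
  acc := fun st c =>
    match st with
    | Sum.inl (_, Sum.inl _) => c = 0 ∨ c = 3        -- X-literal students: v and b
    | Sum.inl (_, Sum.inr _) => c = 0                -- Y-literal students: only v
    | Sum.inr (Sum.inl _) => c = 0                   -- clause students: only v
    | Sum.inr (Sum.inr k) =>
        if k = 0 then (c = 0 ∨ c = 1)                -- d: v and w
        else if k = 2 then (c = 1 ∨ c = 2 ∨ c = 3)   -- r2: b, w, a
        else (c = 2 ∨ c = 3)                         -- r1, r3: a and b
  tau := fun st t =>
    match st, t with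
    | Sum.inl l, Sum.inl vt => decide (l.2 = vt)
    | Sum.inl l, Sum.inr (Sum.inl j) => decide (∃ z : Fin 3, cl j z = l)
    | Sum.inl _, Sum.inr (Sum.inr _) => false
    | Sum.inr (Sum.inl _), Sum.inl _ => false
    | Sum.inr (Sum.inl j), Sum.inr (Sum.inl j') => decide (j = j')
    | Sum.inr (Sum.inl _), Sum.inr (Sum.inr _) => false
    | Sum.inr (Sum.inr k), Sum.inl _ => decide (k = 0)          -- d has all variable types
    | Sum.inr (Sum.inr k), Sum.inr (Sum.inl _) => decide (k = 0) -- d has all clause types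
    | Sum.inr (Sum.inr k), Sum.inr (Sum.inr z) =>
        -- special types: d : 00, r1 : 10, r2 : 11, r3 : 01
        if k = 1 then decide (z = 0)
        else if k = 2 then true
        else if k = 3 then decide (z = 1)
        else false
  rankS := fun st c =>
    match st with
    | Sum.inl (pol, Sum.inl _) =>
        -- x_i : v ≻ b ;  x̄_i : b ≻ v
        if pol then (if c = 0 then 0 else if c = 3 then 1 else 9)
        else (if c = 3 then 0 else if c = 0 then 1 else 9)
    | Sum.inl (_, Sum.inr _) => if c = 0 then 0 else 9
    | Sum.inr (Sum.inl _) => if c = 0 then 0 else 9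
    | Sum.inr (Sum.inr k) =>
        if k = 0 then (if c = 0 then 0 else if c = 1 then 1 else 9)       -- d : v ≻ w
        else if k = 1 then (if c = 3 then 0 else if c = 2 then 1 else 9)  -- r1 : b ≻ a
        else if k = 2 then
          (if c = 3 then 0 else if c = 1 then 1 else if c = 2 then 2 else 9) -- r2 : b ≻ w ≻ a
        else (if c = 2 then 0 else if c = 3 then 1 else 9)                -- r3 : a ≻ b
  rankC := fun c st =>
    if c = 0 then rkV st
    else if c = 1 then
      -- w : d ≻ r2
      (if st = Sum.inr (Sum.inr 0) then 0 else if st = Sum.inr (Sum.inr 2) then 1 else 9)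
    else if c = 2 then
      -- a : r1 ≻ r2 ≻ r3
      (if st = Sum.inr (Sum.inr 1) then 0 else if st = Sum.inr (Sum.inr 2) then 1
       else if st = Sum.inr (Sum.inr 3) then 2 else 9)
    else rkB st
  lq := fun c t =>
    if c = 0 then quotaV r s t
    else if c = 3 then (match t with | Sum.inl (Sum.inl _) => 1 | _ => 0)
    else 0
  uq := fun c t =>
    if c = 0 then quotaV r s t
    else if c = 1 then 1
    else if c = 2 then (match t with | Sum.inr (Sum.inr _) => 1 | _ => 0)
    else (match t with
          | Sum.inl (Sum.inl _) => 1
          | Sum.inl (Sum.inr _) => 0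
          | Sum.inr (Sum.inl _) => 1
          | Sum.inr (Sum.inr _) => 1)
  cap := fun c =>
    if c = 0 then 3 * r + s else if c = 1 then 1 else if c = 2 then 1 else r + 2

end IPrimeConstruction
open Finset in
lemma sum_tau_support {S C T : Type} [Fintype S] [Fintype C] [Fintype T] (I : SMTI S C T)
    (A : Finset S) (z : T) (E : Finset S) (h2 : ∀ u, u ∉ E → I.tau u z = false) :
    ∑ u ∈ A, (I.tau u z).toNat = ∑ u ∈ E, (if u ∈ A then (I.tau u z).toNat else 0) := by
  rw [Finset.sum_ite_mem]
  refine (Finset.sum_subset Finset.inter_subset_right ?_).symm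
  intro u hu hnu
  have : u ∉ E := fun hE => hnu (Finset.mem_inter.2 ⟨hE, hu⟩)
  simp [h2 u this]

section Load
variable {r s : ℕ} (cl : Fin s → Fin 3 → XLit r) (rkV rkB : StP r s → ℕ)

local notation "I'" => IPrime r s cl rkV rkB

lemma loadX (A : Finset (StP r s)) (i : Fin r) :
    ∑ u ∈ A, ((I').tau u (Sum.inl (Sum.inl i))).toNat =
      (if Sum.inl (true, Sum.inl i) ∈ A then 1 else 0)
      + (if Sum.inl (false, Sum.inl i) ∈ A then 1 else 0)
      + (if (Sum.inr (Sum.inr 0) : StP r s) ∈ A then 1 else 0) := by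
  rw [sum_tau_support (I') A _ {Sum.inl (true, Sum.inl i), Sum.inl (false, Sum.inl i), Sum.inr (Sum.inr 0)}]
  · rw [Finset.sum_insert (by simp), Finset.sum_insert (by simp), Finset.sum_singleton]
    simp [IPrime]; ring
  · rintro (⟨pol, vi | vi⟩ | j | k) hu
    · have hvi : vi ≠ i := by rintro rfl; rcases pol <;> simp at hu
      simp [IPrime, hvi]
    · simp [IPrime]
    · simp [IPrime]
    · have hk : k ≠ 0 := by rintro rfl; simp at hu
      fin_cases k <;> simp_all [IPrime]

lemma loadY (A : Finset (StP r s)) (i : Fin r) :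
    ∑ u ∈ A, ((I').tau u (Sum.inl (Sum.inr i))).toNat =
      (if Sum.inl (true, Sum.inr i) ∈ A then 1 else 0)
      + (if Sum.inl (false, Sum.inr i) ∈ A then 1 else 0)
      + (if (Sum.inr (Sum.inr 0) : StP r s) ∈ A then 1 else 0) := by
  rw [sum_tau_support (I') A _ {Sum.inl (true, Sum.inr i), Sum.inl (false, Sum.inr i), Sum.inr (Sum.inr 0)}]
  · rw [Finset.sum_insert (by simp), Finset.sum_insert (by simp), Finset.sum_singleton]
    simp [IPrime]; ring
  · rintro (⟨pol, vi | vi⟩ | j | k) hu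
    · simp [IPrime]
    · have hvi : vi ≠ i := by rintro rfl; rcases pol <;> simp at hu
      simp [IPrime, hvi]
    · simp [IPrime]
    · have hk : k ≠ 0 := by rintro rfl; simp at hu
      fin_cases k <;> simp_all [IPrime]

lemma loadS0 (A : Finset (StP r s)) :
    ∑ u ∈ A, ((I').tau u (Sum.inr (Sum.inr 0))).toNat =
      (if (Sum.inr (Sum.inr 1) : StP r s) ∈ A then 1 else 0)
      + (if (Sum.inr (Sum.inr 2) : StP r s) ∈ A then 1 else 0) := by
  rw [sum_tau_support (I') A _ {Sum.inr (Sum.inr 1), Sum.inr (Sum.inr 2)}]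
  · rw [Finset.sum_insert (by simp), Finset.sum_singleton]
    simp [IPrime]
  · rintro (⟨pol, vi | vi⟩ | j | k) hu
    · simp [IPrime]
    · simp [IPrime]
    · simp [IPrime]
    · have hk1 : k ≠ 1 := by rintro rfl; simp at hu
      have hk2 : k ≠ 2 := by rintro rfl; simp at hu
      fin_cases k <;> simp_all [IPrime]

lemma loadS1 (A : Finset (StP r s)) :
    ∑ u ∈ A, ((I').tau u (Sum.inr (Sum.inr 1))).toNat =
      (if (Sum.inr (Sum.inr 2) : StP r s) ∈ A then 1 else 0)
      + (if (Sum.inr (Sum.inr 3) : StP r s) ∈ A then 1 else 0) := by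
  rw [sum_tau_support (I') A _ {Sum.inr (Sum.inr 2), Sum.inr (Sum.inr 3)}]
  · rw [Finset.sum_insert (by simp), Finset.sum_singleton]
    simp [IPrime]
  · rintro (⟨pol, vi | vi⟩ | j | k) hu
    · simp [IPrime]
    · simp [IPrime]
    · simp [IPrime]
    · have hk1 : k ≠ 2 := by rintro rfl; simp at hu
      have hk2 : k ≠ 3 := by rintro rfl; simp at hu
      fin_cases k <;> simp_all [IPrime]

lemma loadC (hdist : ∀ j : Fin s, Function.Injective (cl j)) (A : Finset (StP r s)) (j : Fin s) :
    ∑ u ∈ A, ((I').tau u (Sum.inr (Sum.inl j))).toNat =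
      (∑ z : Fin 3, if Sum.inl (cl j z) ∈ A then 1 else 0)
      + (if (Sum.inr (Sum.inl j) : StP r s) ∈ A then 1 else 0)
      + (if (Sum.inr (Sum.inr 0) : StP r s) ∈ A then 1 else 0) := by
  classical
  have hinj : Function.Injective (fun z : Fin 3 => (Sum.inl (cl j z) : StP r s)) := by
    intro a b hab
    exact hdist j (by simpa using hab)
  rw [sum_tau_support (I') A _ ((Finset.univ.image (fun z : Fin 3 => (Sum.inl (cl j z) : StP r s)))
      ∪ {Sum.inr (Sum.inl j), Sum.inr (Sum.inr 0)})]
  · rw [Finset.sum_union (by simp), Finset.sum_image (fun a _ b _ h => hinj h),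
      Finset.sum_insert (by simp), Finset.sum_singleton]
    have htau : ∀ z : Fin 3, (I').tau (Sum.inl (cl j z)) (Sum.inr (Sum.inl j)) = true := by
      intro z
      have hz : ∃ z', cl j z' = cl j z := ⟨z, rfl⟩
      simpa [IPrime] using hz
    simp only [htau]
    simp [IPrime]; ring
  · rintro (l | j' | k) hu
    · have : ¬ ∃ z, cl j z = l := by
        rintro ⟨z, rfl⟩
        exact hu (Finset.mem_union_left _ (Finset.mem_image_of_mem _ (Finset.mem_univ z)))
      simp [IPrime, this]
    · have : j' ≠ j := by rintro rfl; simp at hu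
      simp [IPrime, this]
    · have hk : k ≠ 0 := by rintro rfl; simp at hu
      fin_cases k <;> simp_all [IPrime]

end Load
namespace Aux8

variable {r s : ℕ} {cl : Fin s → Fin 3 → XLit r} {rkV rkB : StP r s → ℕ} {f : StP r s → Option ColP}

/-- indicator that `f u = some c` -/
def χ (f : StP r s → Option ColP) (u : StP r s) (c : ColP) : ℕ :=
  if f u = some c then 1 else 0

lemma χ_one {u c} (h : f u = some c) : χ f u c = 1 := by simp [χ, h]
lemma χ_zero {u c} (h : f u ≠ some c) : χ f u c = 0 := by simp [χ, h]
lemma χ_cases (u c) : (χ f u c = 1 ∧ f u = some c) ∨ (χ f u c = 0 ∧ f u ≠ some c) := by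
  by_cases h : f u = some c
  · exact Or.inl ⟨χ_one h, h⟩
  · exact Or.inr ⟨χ_zero h, h⟩

lemma ind_mem (c u) :
    (if u ∈ (IPrime r s cl rkV rkB).assigned f c then (1:ℕ) else 0) = χ f u c := by
  simp [SMTI.assigned, χ]

lemma ind_mem_sdiff (c u) (U' : Finset (StP r s)) (hu : u ∉ U') :
    (if u ∈ (IPrime r s cl rkV rkB).assigned f c \ U' then (1:ℕ) else 0) = χ f u c := by
  simp [SMTI.assigned, χ, Finset.mem_sdiff, hu]

-- acceptability consequences
lemma accX (hM : (IPrime r s cl rkV rkB).IsMatching f) (p i c)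
    (h : f (Sum.inl (p, Sum.inl i)) = some c) : c = 0 ∨ c = 3 := by
  simpa [IPrime] using hM _ _ h

lemma accY (hM : (IPrime r s cl rkV rkB).IsMatching f) (p i c)
    (h : f (Sum.inl (p, Sum.inr i)) = some c) : c = 0 := by
  simpa [IPrime] using hM _ _ h

lemma accD (hM : (IPrime r s cl rkV rkB).IsMatching f) (j c)
    (h : f (Sum.inr (Sum.inl j)) = some c) : c = 0 := by
  simpa [IPrime] using hM _ _ h

lemma accdd (hM : (IPrime r s cl rkV rkB).IsMatching f) (c)
    (h : f (Sum.inr (Sum.inr 0)) = some c) : c = 0 ∨ c = 1 := by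
  simpa [IPrime] using hM _ _ h

lemma accR1 (hM : (IPrime r s cl rkV rkB).IsMatching f) (c)
    (h : f (Sum.inr (Sum.inr 1)) = some c) : c = 2 ∨ c = 3 := by
  simpa [IPrime] using hM _ _ h

lemma accR2 (hM : (IPrime r s cl rkV rkB).IsMatching f) (c)
    (h : f (Sum.inr (Sum.inr 2)) = some c) : c = 1 ∨ c = 2 ∨ c = 3 := by
  simpa [IPrime] using hM _ _ h

lemma accR3 (hM : (IPrime r s cl rkV rkB).IsMatching f) (c)
    (h : f (Sum.inr (Sum.inr 3)) = some c) : c = 2 ∨ c = 3 := by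
  simpa [IPrime] using hM _ _ h

end Aux8
namespace Aux8
variable {r s : ℕ} {cl : Fin s → Fin 3 → XLit r} {rkV rkB : StP r s → ℕ} {f : StP r s → Option ColP}

lemma F1 (hfeas : (IPrime r s cl rkV rkB).Feasible f) (i : Fin r) :
    χ f (Sum.inl (true, Sum.inl i)) 0 + χ f (Sum.inl (false, Sum.inl i)) 0
      + χ f (Sum.inr (Sum.inr 0)) 0 = 1 := by
  have h := (hfeas 0).2 (Sum.inl (Sum.inl i))
  rw [SMTI.typeLoad, loadX] at h
  simp only [ind_mem] at h
  have h1 : (IPrime r s cl rkV rkB).lq 0 (Sum.inl (Sum.inl i)) = 1 := by simp [IPrime, quotaV]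
  have h2 : (IPrime r s cl rkV rkB).uq 0 (Sum.inl (Sum.inl i)) = 1 := by simp [IPrime, quotaV]
  rw [h1, h2] at h
  omega

lemma F2 (hfeas : (IPrime r s cl rkV rkB).Feasible f) (i : Fin r) :
    χ f (Sum.inl (true, Sum.inr i)) 0 + χ f (Sum.inl (false, Sum.inr i)) 0
      + χ f (Sum.inr (Sum.inr 0)) 0 = 2 := by
  have h := (hfeas 0).2 (Sum.inl (Sum.inr i))
  rw [SMTI.typeLoad, loadY] at h
  simp only [ind_mem] at h
  have h1 : (IPrime r s cl rkV rkB).lq 0 (Sum.inl (Sum.inr i)) = 2 := by simp [IPrime, quotaV]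
  have h2 : (IPrime r s cl rkV rkB).uq 0 (Sum.inl (Sum.inr i)) = 2 := by simp [IPrime, quotaV]
  rw [h1, h2] at h
  omega

lemma F3 (hdist : ∀ j : Fin s, Function.Injective (cl j))
    (hfeas : (IPrime r s cl rkV rkB).Feasible f) (j : Fin s) :
    (∑ z : Fin 3, χ f (Sum.inl (cl j z)) 0) + χ f (Sum.inr (Sum.inl j)) 0
      + χ f (Sum.inr (Sum.inr 0)) 0 = 3 := by
  have h := (hfeas 0).2 (Sum.inr (Sum.inl j))
  rw [SMTI.typeLoad, loadC cl rkV rkB hdist] at h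
  simp only [ind_mem] at h
  have h1 : (IPrime r s cl rkV rkB).lq 0 (Sum.inr (Sum.inl j)) = 3 := by simp [IPrime, quotaV]
  have h2 : (IPrime r s cl rkV rkB).uq 0 (Sum.inr (Sum.inl j)) = 3 := by simp [IPrime, quotaV]
  rw [h1, h2] at h
  omega

lemma F4 (hfeas : (IPrime r s cl rkV rkB).Feasible f) (i : Fin r) :
    χ f (Sum.inl (true, Sum.inl i)) 3 + χ f (Sum.inl (false, Sum.inl i)) 3
      + χ f (Sum.inr (Sum.inr 0)) 3 = 1 := by
  have h := (hfeas 3).2 (Sum.inl (Sum.inl i))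
  rw [SMTI.typeLoad, loadX] at h
  simp only [ind_mem] at h
  have h1 : (IPrime r s cl rkV rkB).lq 3 (Sum.inl (Sum.inl i)) = 1 := by simp [IPrime]
  have h2 : (IPrime r s cl rkV rkB).uq 3 (Sum.inl (Sum.inl i)) = 1 := by simp [IPrime]
  rw [h1, h2] at h
  omega

lemma F5a (hfeas : (IPrime r s cl rkV rkB).Feasible f) :
    χ f (Sum.inr (Sum.inr 1)) 3 + χ f (Sum.inr (Sum.inr 2)) 3 ≤ 1 := by
  have h := ((hfeas 3).2 (Sum.inr (Sum.inr 0))).2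
  rw [SMTI.typeLoad, loadS0] at h
  simp only [ind_mem] at h
  have h2 : (IPrime r s cl rkV rkB).uq 3 (Sum.inr (Sum.inr 0)) = 1 := by simp [IPrime]
  rw [h2] at h
  omega

lemma F5b (hfeas : (IPrime r s cl rkV rkB).Feasible f) :
    χ f (Sum.inr (Sum.inr 2)) 3 + χ f (Sum.inr (Sum.inr 3)) 3 ≤ 1 := by
  have h := ((hfeas 3).2 (Sum.inr (Sum.inr 1))).2
  rw [SMTI.typeLoad, loadS1] at h
  simp only [ind_mem] at h
  have h2 : (IPrime r s cl rkV rkB).uq 3 (Sum.inr (Sum.inr 1)) = 1 := by simp [IPrime]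
  rw [h2] at h
  omega

/-- the capacity bound `|M(b)| ≤ r + 1` when `r2` is not at `b` and
at most one of `r1`, `r3` is at `b`. -/
lemma cardB (hM : (IPrime r s cl rkV rkB).IsMatching f)
    (hfeas : (IPrime r s cl rkV rkB).Feasible f)
    (h2 : f (Sum.inr (Sum.inr 2)) ≠ some 3)
    (hone : f (Sum.inr (Sum.inr 1)) ≠ some 3 ∨ f (Sum.inr (Sum.inr 3)) ≠ some 3) :
    ((IPrime r s cl rkV rkB).assigned f 3).card ≤ r + 1 := by
  classical
  set g : StP r s → Fin r ⊕ Fin 1 := fun u =>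
    match u with
    | Sum.inl (_, Sum.inl i) => Sum.inl i
    | _ => Sum.inr 0 with hg
  have hcard : ((IPrime r s cl rkV rkB).assigned f 3).card ≤ (Finset.univ : Finset (Fin r ⊕ Fin 1)).card := by
    apply Finset.card_le_card_of_injOn g (fun _ _ => Finset.mem_univ _)
    intro u hu u' hu' hgu
    have hfu : f u = some 3 := by simpa [SMTI.assigned] using hu
    have hfu' : f u' = some 3 := by simpa [SMTI.assigned] using hu'
    -- characterize u and u'
    have hchar : ∀ x : StP r s, f x = some 3 →
        (∃ p i, x = Sum.inl (p, Sum.inl i)) ∨ x = Sum.inr (Sum.inr 1) ∨ x = Sum.inr (Sum.inr 3) := by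
      rintro (⟨p, vi | vi⟩ | j | k) hx
      · exact Or.inl ⟨p, vi, rfl⟩
      · exact absurd (accY hM p vi 3 hx) (by decide)
      · exact absurd (accD hM j 3 hx) (by decide)
      · fin_cases k
        · exact absurd (accdd hM 3 hx) (by decide)
        · exact Or.inr (Or.inl rfl)
        · exact absurd hx h2
        · exact Or.inr (Or.inr rfl)
    rcases hchar u hfu with ⟨p, i, rfl⟩ | rfl | rfl <;>
      rcases hchar u' hfu' with ⟨p', i', rfl⟩ | rfl | rfl
    · -- both X-literals
      have hi : i = i' := by simpa [hg] using hgu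
      subst hi
      have hp : p = p' := by
        by_contra hpp
        have hF := F4 hfeas i
        rcases p <;> rcases p' <;> simp_all [χ_one] <;> omega
      rw [hp]
    · simp [hg] at hgu
    · simp [hg] at hgu
    · simp [hg] at hgu
    · rfl
    · rcases hone with h | h
      · exact absurd hfu h
      · exact absurd hfu' h
    · simp [hg] at hgu
    · rcases hone with h | h
      · exact absurd hfu' h
      · exact absurd hfu h
    · rfl
  simpa using hcard

end Aux8
section Bridge
variable {S C T : Type} [Fintype S] [Fintype C] [Fintype T]

lemma mem_assigned_iff (I : SMTI S C T) (f : S → Option C) (w : C) (u : S) :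
    u ∈ I.assigned f w ↔ f u = some w := by simp [SMTI.assigned]

lemma mem_assigned_sdiff_iff (I : SMTI S C T) (f : S → Option C) (w : C) (U' : Finset S) (u : S) :
    u ∈ I.assigned f w \ U' ↔ f u = some w ∧ u ∉ U' := by simp [SMTI.assigned]

lemma assigned_sdiff_self (I : SMTI S C T) (f : S → Option C) (w : C) :
    I.assigned f w \ I.assigned f w = ∅ := Finset.sdiff_self _

lemma assigned_sdiff_of_empty (I : SMTI S C T) (f : S → Option C) (w : C)
    (h : I.assigned f w = ∅) (U' : Finset S) : I.assigned f w \ U' = ∅ := by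
  rw [h]; exact Finset.empty_sdiff _

lemma assigned_sdiff_empty (I : SMTI S C T) (f : S → Option C) (w : C) :
    I.assigned f w \ (∅ : Finset S) = I.assigned f w := Finset.sdiff_empty

lemma card_assigned_sdiff_singleton (I : SMTI S C T) (f : S → Option C) (w : C) (u : S)
    (h : f u = some w) : (I.assigned f w \ {u}).card + 1 = (I.assigned f w).card := by
  have hu : u ∈ I.assigned f w := (mem_assigned_iff I f w u).2 h
  rw [Finset.card_sdiff_of_subset (Finset.singleton_subset_iff.2 hu)]
  have := Finset.card_pos.2 ⟨u, hu⟩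
  simp only [Finset.card_singleton]
  omega

lemma sum_assigned_sdiff_le (I : SMTI S C T) (f : S → Option C) (w : C) (U' : Finset S)
    (g : S → ℕ) : ∑ u ∈ I.assigned f w \ U', g u ≤ ∑ u ∈ I.assigned f w, g u :=
  Finset.sum_le_sum_of_subset (Finset.sdiff_subset)

lemma assigned_sdiff_subset_empty (I : SMTI S C T) (f : S → Option C) (w : C) (U' : Finset S)
    (h : ∀ x ∈ I.assigned f w, x ∈ U') : I.assigned f w \ U' = ∅ := by
  rw [Finset.sdiff_eq_empty_iff_subset]
  exact h

end Bridge

namespace Aux8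
variable {r s : ℕ} {cl : Fin s → Fin 3 → XLit r} {rkV rkB : StP r s → ℕ} {f : StP r s → Option ColP}

lemma ind_mem_sdiff' (c : ColP) (u : StP r s) (U' : Finset (StP r s)) (hu : u ∉ U') :
    (if u ∈ (IPrime r s cl rkV rkB).assigned f c \ U' then (1:ℕ) else 0) = χ f u c := by
  simp [SMTI.assigned, χ, Finset.mem_sdiff, hu]

lemma charW (hM : (IPrime r s cl rkV rkB).IsMatching f) (u : StP r s) (h : f u = some 1) :
    u = Sum.inr (Sum.inr 0) ∨ u = Sum.inr (Sum.inr 2) := by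
  rcases u with (⟨p, vi | vi⟩ | j | k)
  · rcases accX hM p vi 1 h with h' | h' <;> exact absurd h' (by decide)
  · exact absurd (accY hM p vi 1 h) (by decide)
  · exact absurd (accD hM j 1 h) (by decide)
  · fin_cases k
    · exact Or.inl rfl
    · rcases accR1 hM 1 h with h' | h' <;> exact absurd h' (by decide)
    · exact Or.inr rfl
    · rcases accR3 hM 1 h with h' | h' <;> exact absurd h' (by decide)

lemma charA (hM : (IPrime r s cl rkV rkB).IsMatching f) (u : StP r s) (h : f u = some 2) :
    u = Sum.inr (Sum.inr 1) ∨ u = Sum.inr (Sum.inr 2) ∨ u = Sum.inr (Sum.inr 3) := by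
  rcases u with (⟨p, vi | vi⟩ | j | k)
  · rcases accX hM p vi 2 h with h' | h' <;> exact absurd h' (by decide)
  · exact absurd (accY hM p vi 2 h) (by decide)
  · exact absurd (accD hM j 2 h) (by decide)
  · fin_cases k
    · rcases accdd hM 2 h with h' | h' <;> exact absurd h' (by decide)
    · exact Or.inl rfl
    · exact Or.inr (Or.inl rfl)
    · exact Or.inr (Or.inr rfl)

lemma tau_le_one (u : StP r s) (z : TyP r s) :
    ((IPrime r s cl rkV rkB).tau u z).toNat ≤ 1 := by
  cases h : (IPrime r s cl rkV rkB).tau u z <;> simp [h]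

lemma ind_eq_χ_of_iff {A : Finset (StP r s)} {u : StP r s} {c : ColP}
    (h : u ∈ A ↔ f u = some c) :
    (if u ∈ A then (1:ℕ) else 0) = χ f u c := by
  by_cases hf : f u = some c
  · rw [if_pos (h.2 hf), χ_one hf]
  · rw [if_neg (fun hm => hf (h.1 hm)), χ_zero hf]

lemma ind_zero_of_notMem {A : Finset (StP r s)} {u : StP r s} (h : u ∉ A) :
    (if u ∈ A then (1:ℕ) else 0) = 0 := if_neg h

lemma dd_matched (hM : (IPrime r s cl rkV rkB).IsMatching f)
    (hstab : (IPrime r s cl rkV rkB).Stable f) :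
    f (Sum.inr (Sum.inr 0)) ≠ none := by
  intro hn
  apply hstab (Sum.inr (Sum.inr 0)) 1
  refine ⟨(IPrime r s cl rkV rkB).assigned f 1, ?_, ?_, ?_, subset_rfl, ?_, ?_, ?_⟩
  · simp [hn]
  · simp [IPrime]
  · intro w' hw'; rw [hn] at hw'; cases hw'
  · intro u' hu'
    have hf : f u' = some 1 := (mem_assigned_iff _ f 1 u').1 hu'
    rcases charW hM u' hf with rfl | rfl
    · rw [hn] at hf; cases hf
    · simp [IPrime]
  · rw [assigned_sdiff_self]
    simp [IPrime]
  · intro z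
    rw [assigned_sdiff_self]
    simp only [Finset.sum_empty, Nat.add_zero]
    constructor
    · have h0 : (IPrime r s cl rkV rkB).lq 1 z = 0 := by simp [IPrime]
      omega
    · have h1 : (IPrime r s cl rkV rkB).uq 1 z = 1 := by simp [IPrime]
      rw [h1]; exact tau_le_one _ _

end Aux8

namespace Aux8
variable {r s : ℕ} {cl : Fin s → Fin 3 → XLit r} {rkV rkB : StP r s → ℕ} {f : StP r s → Option ColP}

lemma notY3 (hM : (IPrime r s cl rkV rkB).IsMatching f) (p : Bool) (i : Fin r) :
    f (Sum.inl (p, Sum.inr i)) ≠ some 3 := fun h => absurd (accY hM p i 3 h) (by decide)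

lemma notD3 (hM : (IPrime r s cl rkV rkB).IsMatching f) (j : Fin s) :
    f (Sum.inr (Sum.inl j)) ≠ some 3 := fun h => absurd (accD hM j 3 h) (by decide)

lemma notdd3 (hM : (IPrime r s cl rkV rkB).IsMatching f) :
    f (Sum.inr (Sum.inr 0)) ≠ some 3 := fun h => by
  rcases accdd hM 3 h with h' | h' <;> exact absurd h' (by decide)

lemma noR2b (hM : (IPrime r s cl rkV rkB).IsMatching f)
    (hfeas : (IPrime r s cl rkV rkB).Feasible f)
    (hstab : (IPrime r s cl rkV rkB).Stable f)
    (hB : RealizesBlocks (blockB r s) rkB) :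
    f (Sum.inr (Sum.inr 2)) ≠ some 3 := by
  intro hb
  have hR1 : f (Sum.inr (Sum.inr 1)) ≠ some 3 := by
    intro h1
    have := F5a (f := f) hfeas
    rw [χ_one hb, χ_one h1] at this; omega
  have hR3 : f (Sum.inr (Sum.inr 3)) ≠ some 3 := by
    intro h3
    have := F5b (f := f) hfeas
    rw [χ_one hb, χ_one h3] at this; omega
  by_cases hr3a : f (Sum.inr (Sum.inr 3)) = some 2
  · -- r3 at a, r1 unmatched: (r1, a) blocks with witness {r3}
    have hfr1 : f (Sum.inr (Sum.inr 1)) = none := by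
      rcases h : f (Sum.inr (Sum.inr 1)) with _ | c
      · rfl
      · rcases accR1 hM c h with rfl | rfl
        · -- r1 at a together with r3: capacity of a is 1
          exfalso
          have hcard : ((IPrime r s cl rkV rkB).assigned f 2).card ≤ 1 := by
            have := (hfeas 2).1
            simpa [IPrime] using this
          have h1 := (mem_assigned_iff (IPrime r s cl rkV rkB) f 2 _).2 h
          have h2 := (mem_assigned_iff (IPrime r s cl rkV rkB) f 2 _).2 hr3a
          have := Finset.card_le_one.1 hcard _ h1 _ h2
          simp at this
        · exact absurd h hR1
    have hsub : ∀ x ∈ (IPrime r s cl rkV rkB).assigned f 2, x ∈ ({Sum.inr (Sum.inr 3)} : Finset (StP r s)) := by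
      intro x hx
      have hfx := (mem_assigned_iff (IPrime r s cl rkV rkB) f 2 x).1 hx
      rcases charA hM x hfx with rfl | rfl | rfl
      · exact absurd hfx (by rw [hfr1]; simp)
      · exfalso; rw [hb] at hfx; simp at hfx
      · simp
    have hempty := assigned_sdiff_subset_empty (IPrime r s cl rkV rkB) f 2 {Sum.inr (Sum.inr 3)} hsub
    apply hstab (Sum.inr (Sum.inr 1)) 2
    refine ⟨{Sum.inr (Sum.inr 3)}, ?_, ?_, ?_, ?_, ?_, ?_, ?_⟩
    · rw [hfr1]; simp
    · simp [IPrime]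
    · intro w' hw'; rw [hfr1] at hw'; cases hw'
    · exact Finset.singleton_subset_iff.2 ((mem_assigned_iff _ f 2 _).2 hr3a)
    · intro u' hu'
      rcases Finset.mem_singleton.1 hu' with rfl
      simp [IPrime]
    · rw [hempty]; simp [IPrime]
    · intro z
      rw [hempty]
      simp only [Finset.sum_empty, Nat.add_zero]
      constructor
      · have h0 : (IPrime r s cl rkV rkB).lq 2 z = 0 := by simp [IPrime]
        omega
      · rcases z with (vi | vi) | (jj | k)
        · simp [IPrime]
        · simp [IPrime]
        · simp [IPrime]
        · fin_cases k <;> simp [IPrime]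
  · -- r3 unmatched: (r3, b) blocks with witness {r2}
    have hfr3 : f (Sum.inr (Sum.inr 3)) = none := by
      rcases h : f (Sum.inr (Sum.inr 3)) with _ | c
      · rfl
      · rcases accR3 hM c h with rfl | rfl
        · exact absurd h hr3a
        · exact absurd h hR3
    apply hstab (Sum.inr (Sum.inr 3)) 3
    refine ⟨{Sum.inr (Sum.inr 2)}, ?_, ?_, ?_, ?_, ?_, ?_, ?_⟩
    · rw [hfr3]; simp
    · simp [IPrime]
    · intro w' hw'; rw [hfr3] at hw'; cases hw'
    · exact Finset.singleton_subset_iff.2 ((mem_assigned_iff _ f 3 _).2 hb)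
    · intro u' hu'
      rcases Finset.mem_singleton.1 hu' with rfl
      have e : ∀ st : StP r s, (IPrime r s cl rkV rkB).rankC 3 st = rkB st := by
        intro st; simp [IPrime]
      rw [e, e]
      exact hB.2 _ _ (by simp only [blockB]; decide)
    · have := card_assigned_sdiff_singleton (IPrime r s cl rkV rkB) f 3 _ hb
      have hcap := (hfeas 3).1
      have hc3 : (IPrime r s cl rkV rkB).cap 3 = r + 2 := by simp [IPrime]
      omega
    · intro z
      have hiff := fun (u : StP r s) =>
        mem_assigned_sdiff_iff (IPrime r s cl rkV rkB) f 3 {Sum.inr (Sum.inr 2)} u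
      have hiff' : ∀ u : StP r s, u ∉ ({Sum.inr (Sum.inr 2)} : Finset (StP r s)) →
          ∀ A : Finset (StP r s), (u ∈ A ↔ f u = some 3 ∧ u ∉ ({Sum.inr (Sum.inr 2)} : Finset (StP r s))) →
          (u ∈ A ↔ f u = some 3) := by
        intro u hu A hA
        rw [hA]
        exact and_iff_left hu
      have hnot := fun hm =>
        ((hiff (Sum.inr (Sum.inr 2))).1 hm).2 (Finset.mem_singleton_self _)
      rcases z with (vi | vi) | (jj | k)
      · -- X type: load stays exactly 1
        rw [loadX, ind_eq_χ_of_iff (hiff' _ (by simp) _ (hiff _)),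
          ind_eq_χ_of_iff (hiff' _ (by simp) _ (hiff _)),
          ind_eq_χ_of_iff (hiff' _ (by simp) _ (hiff _))]
        have hF := F4 (f := f) hfeas vi
        have hlq : (IPrime r s cl rkV rkB).lq 3 (Sum.inl (Sum.inl vi)) = 1 := by simp [IPrime]
        have huq : (IPrime r s cl rkV rkB).uq 3 (Sum.inl (Sum.inl vi)) = 1 := by simp [IPrime]
        have htau : ((IPrime r s cl rkV rkB).tau (Sum.inr (Sum.inr 3)) (Sum.inl (Sum.inl vi))).toNat = 0 := by
          simp [IPrime]
        rw [hlq, huq, htau]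
        omega
      · -- Y type: all contributors are elsewhere
        rw [loadY, ind_eq_χ_of_iff (hiff' _ (by simp) _ (hiff _)),
          ind_eq_χ_of_iff (hiff' _ (by simp) _ (hiff _)),
          ind_eq_χ_of_iff (hiff' _ (by simp) _ (hiff _)),
          χ_zero (notY3 hM true vi), χ_zero (notY3 hM false vi), χ_zero (notdd3 hM)]
        simp [IPrime]
      · -- clause type: bounded by the upper quota via monotonicity
        have hmono := sum_assigned_sdiff_le (IPrime r s cl rkV rkB) f 3 {Sum.inr (Sum.inr 2)}
          (fun u => ((IPrime r s cl rkV rkB).tau u (Sum.inr (Sum.inl jj))).toNat)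
        have hub := ((hfeas 3).2 (Sum.inr (Sum.inl jj))).2
        simp only [SMTI.typeLoad] at hub
        have huq : (IPrime r s cl rkV rkB).uq 3 (Sum.inr (Sum.inl jj)) = 1 := by simp [IPrime]
        have hlq : (IPrime r s cl rkV rkB).lq 3 (Sum.inr (Sum.inl jj)) = 0 := by simp [IPrime]
        have htau : ((IPrime r s cl rkV rkB).tau (Sum.inr (Sum.inr 3)) (Sum.inr (Sum.inl jj))).toNat = 0 := by
          simp [IPrime]
        rw [hlq, huq, htau]
        omega
      · obtain ⟨kv, hklt⟩ := k
        interval_cases kv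
        · -- special type 0
          simp only [Fin.mk_zero]
          rw [loadS0, ind_eq_χ_of_iff (hiff' _ (by simp) _ (hiff _)),
            ind_zero_of_notMem hnot, χ_zero hR1]
          simp [IPrime]
        · -- special type 1
          simp only [Fin.mk_one]
          rw [loadS1, ind_zero_of_notMem hnot,
            ind_eq_χ_of_iff (hiff' _ (by simp) _ (hiff _)),
            χ_zero (fun h => by rw [hfr3] at h; cases h)]
          simp [IPrime]

end Aux8
namespace Aux8
variable {r s : ℕ} {cl : Fin s → Fin 3 → XLit r} {rkV rkB : StP r s → ℕ} {f : StP r s → Option ColP}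

lemma dd_at_w (hM : (IPrime r s cl rkV rkB).IsMatching f)
    (hfeas : (IPrime r s cl rkV rkB).Feasible f)
    (hstab : (IPrime r s cl rkV rkB).Stable f)
    (hB : RealizesBlocks (blockB r s) rkB) :
    f (Sum.inr (Sum.inr 0)) = some 1 := by
  rcases h : f (Sum.inr (Sum.inr 0)) with _ | c
  · exact absurd h (dd_matched hM hstab)
  rcases accdd hM c h with rfl | rfl
  swap
  · rfl
  -- d is at v; derive a contradiction
  exfalso
  have hR2b : f (Sum.inr (Sum.inr 2)) ≠ some 3 := noR2b hM hfeas hstab hB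
  by_cases hR2w : f (Sum.inr (Sum.inr 2)) = some 1
  · -- r2 at w: force r1 at b, then case on r3
    have hR2b' : χ f (Sum.inr (Sum.inr 2)) 3 = 0 := χ_zero hR2b
    have hR1b : f (Sum.inr (Sum.inr 1)) = some 3 := by
      by_contra hR1b
      apply hstab (Sum.inr (Sum.inr 1)) 3
      refine ⟨∅, hR1b, ?_, ?_, Finset.empty_subset _, ?_, ?_, ?_⟩
      · simp [IPrime]
      · intro w' hw'
        rcases accR1 hM w' hw' with rfl | rfl
        · simp [IPrime]
        · exact absurd hw' hR1b
      · intro u' hu'; simp at hu'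
      · rw [assigned_sdiff_empty]
        have hcb := cardB hM hfeas hR2b (Or.inl hR1b)
        have hc3 : (IPrime r s cl rkV rkB).cap 3 = r + 2 := by simp [IPrime]
        omega
      · intro z
        rw [assigned_sdiff_empty]
        have hiff0 := mem_assigned_iff (IPrime r s cl rkV rkB) f 3
        rcases z with (vi | vi) | (jj | k)
        · rw [loadX, ind_eq_χ_of_iff (hiff0 _), ind_eq_χ_of_iff (hiff0 _),
            ind_eq_χ_of_iff (hiff0 _)]
          have hF := F4 (f := f) hfeas vi
          have hlq : (IPrime r s cl rkV rkB).lq 3 (Sum.inl (Sum.inl vi)) = 1 := by simp [IPrime]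
          have huq : (IPrime r s cl rkV rkB).uq 3 (Sum.inl (Sum.inl vi)) = 1 := by simp [IPrime]
          have htau : ((IPrime r s cl rkV rkB).tau (Sum.inr (Sum.inr 1)) (Sum.inl (Sum.inl vi))).toNat = 0 := by
            simp [IPrime]
          rw [hlq, huq, htau]; omega
        · rw [loadY, ind_eq_χ_of_iff (hiff0 _), ind_eq_χ_of_iff (hiff0 _),
            ind_eq_χ_of_iff (hiff0 _), χ_zero (notY3 hM true vi), χ_zero (notY3 hM false vi),
            χ_zero (notdd3 hM)]
          simp [IPrime]
        · have hub := ((hfeas 3).2 (Sum.inr (Sum.inl jj))).2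
          simp only [SMTI.typeLoad] at hub
          have huq : (IPrime r s cl rkV rkB).uq 3 (Sum.inr (Sum.inl jj)) = 1 := by simp [IPrime]
          have hlq : (IPrime r s cl rkV rkB).lq 3 (Sum.inr (Sum.inl jj)) = 0 := by simp [IPrime]
          have htau : ((IPrime r s cl rkV rkB).tau (Sum.inr (Sum.inr 1)) (Sum.inr (Sum.inl jj))).toNat = 0 := by
            simp [IPrime]
          rw [hlq, huq, htau]; omega
        · obtain ⟨kv, hklt⟩ := k
          interval_cases kv
          · simp only [Fin.mk_zero]
            rw [loadS0, ind_eq_χ_of_iff (hiff0 _), ind_eq_χ_of_iff (hiff0 _),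
              χ_zero hR1b, hR2b']
            simp [IPrime]
          · simp only [Fin.mk_one]
            rw [loadS1, ind_eq_χ_of_iff (hiff0 _), ind_eq_χ_of_iff (hiff0 _)]
            have hF := F5b (f := f) hfeas
            have hlq : (IPrime r s cl rkV rkB).lq 3 (Sum.inr (Sum.inr 1)) = 0 := by simp [IPrime]
            have huq : (IPrime r s cl rkV rkB).uq 3 (Sum.inr (Sum.inr 1)) = 1 := by simp [IPrime]
            have htau : ((IPrime r s cl rkV rkB).tau (Sum.inr (Sum.inr 1)) (Sum.inr (Sum.inr 1))).toNat = 0 := by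
              simp [IPrime]
            rw [hlq, huq, htau]; omega
    -- now r3 must be matched (to a or b)
    have hR3ab : f (Sum.inr (Sum.inr 3)) = some 2 ∨ f (Sum.inr (Sum.inr 3)) = some 3 := by
      rcases h3 : f (Sum.inr (Sum.inr 3)) with _ | c3
      · -- r3 unmatched: (r3, b) blocks with empty witness
        exfalso
        apply hstab (Sum.inr (Sum.inr 3)) 3
        refine ⟨∅, by rw [h3]; simp, ?_, ?_, Finset.empty_subset _, ?_, ?_, ?_⟩
        · simp [IPrime]
        · intro w' hw'; rw [h3] at hw'; cases hw'
        · intro u' hu'; simp at hu'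
        · rw [assigned_sdiff_empty]
          have hcb := cardB hM hfeas hR2b (Or.inr (by rw [h3]; simp))
          have hc3 : (IPrime r s cl rkV rkB).cap 3 = r + 2 := by simp [IPrime]
          omega
        · intro z
          rw [assigned_sdiff_empty]
          have hiff0 := mem_assigned_iff (IPrime r s cl rkV rkB) f 3
          rcases z with (vi | vi) | (jj | k)
          · rw [loadX, ind_eq_χ_of_iff (hiff0 _), ind_eq_χ_of_iff (hiff0 _),
              ind_eq_χ_of_iff (hiff0 _)]
            have hF := F4 (f := f) hfeas vi
            have hlq : (IPrime r s cl rkV rkB).lq 3 (Sum.inl (Sum.inl vi)) = 1 := by simp [IPrime]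
            have huq : (IPrime r s cl rkV rkB).uq 3 (Sum.inl (Sum.inl vi)) = 1 := by simp [IPrime]
            have htau : ((IPrime r s cl rkV rkB).tau (Sum.inr (Sum.inr 3)) (Sum.inl (Sum.inl vi))).toNat = 0 := by
              simp [IPrime]
            rw [hlq, huq, htau]; omega
          · rw [loadY, ind_eq_χ_of_iff (hiff0 _), ind_eq_χ_of_iff (hiff0 _),
              ind_eq_χ_of_iff (hiff0 _), χ_zero (notY3 hM true vi), χ_zero (notY3 hM false vi),
              χ_zero (notdd3 hM)]
            simp [IPrime]
          · have hub := ((hfeas 3).2 (Sum.inr (Sum.inl jj))).2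
            simp only [SMTI.typeLoad] at hub
            have huq : (IPrime r s cl rkV rkB).uq 3 (Sum.inr (Sum.inl jj)) = 1 := by simp [IPrime]
            have hlq : (IPrime r s cl rkV rkB).lq 3 (Sum.inr (Sum.inl jj)) = 0 := by simp [IPrime]
            have htau : ((IPrime r s cl rkV rkB).tau (Sum.inr (Sum.inr 3)) (Sum.inr (Sum.inl jj))).toNat = 0 := by
              simp [IPrime]
            rw [hlq, huq, htau]; omega
          · obtain ⟨kv, hklt⟩ := k
            interval_cases kv
            · simp only [Fin.mk_zero]
              rw [loadS0, ind_eq_χ_of_iff (hiff0 _), ind_eq_χ_of_iff (hiff0 _), hR2b']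
              have hF := F5a (f := f) hfeas
              have htau : ((IPrime r s cl rkV rkB).tau (Sum.inr (Sum.inr 3)) (Sum.inr (Sum.inr 0))).toNat = 0 := by
                simp [IPrime]
              have hlq : (IPrime r s cl rkV rkB).lq 3 (Sum.inr (Sum.inr 0)) = 0 := by simp [IPrime]
              have huq : (IPrime r s cl rkV rkB).uq 3 (Sum.inr (Sum.inr 0)) = 1 := by simp [IPrime]
              rw [hlq, huq, htau]; omega
            · simp only [Fin.mk_one]
              rw [loadS1, ind_eq_χ_of_iff (hiff0 _), ind_eq_χ_of_iff (hiff0 _), hR2b',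
                χ_zero (show f (Sum.inr (Sum.inr 3)) ≠ some 3 by rw [h3]; simp)]
              simp [IPrime]
      · rcases accR3 hM c3 h3 with rfl | rfl
        · exact Or.inl rfl
        · exact Or.inr rfl
    rcases hR3ab with hR3a | hR3b
    · -- r3 at a: (r2, b) blocks with witness {r1}
      apply hstab (Sum.inr (Sum.inr 2)) 3
      refine ⟨{Sum.inr (Sum.inr 1)}, hR2b, ?_, ?_, ?_, ?_, ?_, ?_⟩
      · simp [IPrime]
      · intro w' hw'
        rw [hR2w] at hw'
        obtain rfl : w' = 1 := (Option.some.inj hw').symm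
        simp [IPrime]
      · exact Finset.singleton_subset_iff.2 ((mem_assigned_iff _ f 3 _).2 hR1b)
      · intro u' hu'
        rcases Finset.mem_singleton.1 hu' with rfl
        have e : ∀ st : StP r s, (IPrime r s cl rkV rkB).rankC 3 st = rkB st := by
          intro st; simp [IPrime]
        rw [e, e]
        exact hB.2 _ _ (by simp only [blockB]; decide)
      · have := card_assigned_sdiff_singleton (IPrime r s cl rkV rkB) f 3 _ hR1b
        have hcap := (hfeas 3).1
        have hc3 : (IPrime r s cl rkV rkB).cap 3 = r + 2 := by simp [IPrime]
        omega
      · intro z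
        have hiff := fun (u : StP r s) =>
          mem_assigned_sdiff_iff (IPrime r s cl rkV rkB) f 3 {Sum.inr (Sum.inr 1)} u
        have hiff' : ∀ u : StP r s, u ∉ ({Sum.inr (Sum.inr 1)} : Finset (StP r s)) →
            ∀ A : Finset (StP r s),
            (u ∈ A ↔ f u = some 3 ∧ u ∉ ({Sum.inr (Sum.inr 1)} : Finset (StP r s))) →
            (u ∈ A ↔ f u = some 3) := by
          intro u hu A hA
          rw [hA]
          exact and_iff_left hu
        have hnot := fun hm =>
          ((hiff (Sum.inr (Sum.inr 1))).1 hm).2 (Finset.mem_singleton_self _)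
        rcases z with (vi | vi) | (jj | k)
        · rw [loadX, ind_eq_χ_of_iff (hiff' _ (by simp) _ (hiff _)),
            ind_eq_χ_of_iff (hiff' _ (by simp) _ (hiff _)),
            ind_eq_χ_of_iff (hiff' _ (by simp) _ (hiff _))]
          have hF := F4 (f := f) hfeas vi
          have hlq : (IPrime r s cl rkV rkB).lq 3 (Sum.inl (Sum.inl vi)) = 1 := by simp [IPrime]
          have huq : (IPrime r s cl rkV rkB).uq 3 (Sum.inl (Sum.inl vi)) = 1 := by simp [IPrime]
          have htau : ((IPrime r s cl rkV rkB).tau (Sum.inr (Sum.inr 2)) (Sum.inl (Sum.inl vi))).toNat = 0 := by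
            simp [IPrime]
          rw [hlq, huq, htau]; omega
        · rw [loadY, ind_eq_χ_of_iff (hiff' _ (by simp) _ (hiff _)),
            ind_eq_χ_of_iff (hiff' _ (by simp) _ (hiff _)),
            ind_eq_χ_of_iff (hiff' _ (by simp) _ (hiff _)),
            χ_zero (notY3 hM true vi), χ_zero (notY3 hM false vi), χ_zero (notdd3 hM)]
          simp [IPrime]
        · have hmono := sum_assigned_sdiff_le (IPrime r s cl rkV rkB) f 3 {Sum.inr (Sum.inr 1)}
            (fun u => ((IPrime r s cl rkV rkB).tau u (Sum.inr (Sum.inl jj))).toNat)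
          have hub := ((hfeas 3).2 (Sum.inr (Sum.inl jj))).2
          simp only [SMTI.typeLoad] at hub
          have huq : (IPrime r s cl rkV rkB).uq 3 (Sum.inr (Sum.inl jj)) = 1 := by simp [IPrime]
          have hlq : (IPrime r s cl rkV rkB).lq 3 (Sum.inr (Sum.inl jj)) = 0 := by simp [IPrime]
          have htau : ((IPrime r s cl rkV rkB).tau (Sum.inr (Sum.inr 2)) (Sum.inr (Sum.inl jj))).toNat = 0 := by
            simp [IPrime]
          rw [hlq, huq, htau]; omega
        · obtain ⟨kv, hklt⟩ := k
          interval_cases kv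
          · simp only [Fin.mk_zero]
            rw [loadS0, ind_zero_of_notMem hnot,
              ind_eq_χ_of_iff (hiff' _ (by simp) _ (hiff _)), χ_zero hR2b]
            simp [IPrime]
          · simp only [Fin.mk_one]
            rw [loadS1, ind_eq_χ_of_iff (hiff' _ (by simp) _ (hiff _)),
              ind_eq_χ_of_iff (hiff' _ (by simp) _ (hiff _)), χ_zero hR2b,
              χ_zero (show f (Sum.inr (Sum.inr 3)) ≠ some 3 by rw [hR3a]; simp)]
            simp [IPrime]
    · -- r3 at b, a empty: (r3, a) blocks with empty witness
      have hMa : (IPrime r s cl rkV rkB).assigned f 2 = ∅ := by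
        rw [Finset.eq_empty_iff_forall_notMem]
        intro x hx
        have hfx := (mem_assigned_iff (IPrime r s cl rkV rkB) f 2 x).1 hx
        rcases charA hM x hfx with rfl | rfl | rfl
        · rw [hR1b] at hfx; simp at hfx
        · rw [hR2w] at hfx; simp at hfx
        · rw [hR3b] at hfx; simp at hfx
      apply hstab (Sum.inr (Sum.inr 3)) 2
      refine ⟨∅, by rw [hR3b]; simp, ?_, ?_, Finset.empty_subset _, ?_, ?_, ?_⟩
      · simp [IPrime]
      · intro w' hw'
        rw [hR3b] at hw'
        obtain rfl : w' = 3 := (Option.some.inj hw').symm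
        simp [IPrime]
      · intro u' hu'; simp at hu'
      · rw [assigned_sdiff_empty, hMa]
        simp [IPrime]
      · intro z
        rw [assigned_sdiff_empty, hMa]
        simp only [Finset.sum_empty, Nat.add_zero]
        constructor
        · have h0 : (IPrime r s cl rkV rkB).lq 2 z = 0 := by simp [IPrime]
          omega
        · rcases z with (vi | vi) | (jj | k)
          · simp [IPrime]
          · simp [IPrime]
          · simp [IPrime]
          · have huq : (IPrime r s cl rkV rkB).uq 2 (Sum.inr (Sum.inr k)) = 1 := by simp [IPrime]
            rw [huq]
            exact tau_le_one _ _
  · -- r2 not at w, hence w is empty: (r2, w) blocks with empty witness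
    have hMw : (IPrime r s cl rkV rkB).assigned f 1 = ∅ := by
      rw [Finset.eq_empty_iff_forall_notMem]
      intro x hx
      have hfx := (mem_assigned_iff (IPrime r s cl rkV rkB) f 1 x).1 hx
      rcases charW hM x hfx with rfl | rfl
      · rw [h] at hfx; simp at hfx
      · exact hR2w hfx
    apply hstab (Sum.inr (Sum.inr 2)) 1
    refine ⟨∅, hR2w, ?_, ?_, Finset.empty_subset _, ?_, ?_, ?_⟩
    · simp [IPrime]
    · intro w' hw'
      rcases accR2 hM w' hw' with rfl | rfl | rfl
      · exact absurd hw' hR2w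
      · simp [IPrime]
      · exact absurd hw' hR2b
    · intro u' hu'; simp at hu'
    · rw [assigned_sdiff_empty, hMw]
      simp [IPrime]
    · intro z
      rw [assigned_sdiff_empty, hMw]
      simp only [Finset.sum_empty, Nat.add_zero]
      constructor
      · have h0 : (IPrime r s cl rkV rkB).lq 1 z = 0 := by simp [IPrime]
        omega
      · have h1 : (IPrime r s cl rkV rkB).uq 1 z = 1 := by simp [IPrime]
        rw [h1]
        exact tau_le_one _ _

end Aux8
open Aux8 in

/-- Every feasible and stable matching `f` of the instance `I'`
satisfies: (1) for each `i`, either `x_i` goes to `v` and `x̄_i` to `b`, or vice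
versa; (2) `d` goes to `w`; (3) every `Y`-literal student goes to `v`; (4) the
clause student `d_j` goes to `v` iff exactly two literal students of `C_j` go to `v`. -/
theorem stmt8 (r s : ℕ) (cl : Fin s → Fin 3 → XLit r)
    (hY : ∀ j : Fin s, 2 ≤ (Finset.univ.filter fun z : Fin 3 => (cl j z).2.isRight = true).card)
    (hdist : ∀ j : Fin s, Function.Injective (cl j))
    (rkV rkB : StP r s → ℕ)
    (hV : RealizesBlocks (blockV r s) rkV) (hB : RealizesBlocks (blockB r s) rkB)
    (f : StP r s → Option ColP)
    (hM : (IPrime r s cl rkV rkB).IsMatching f)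
    (hfeas : (IPrime r s cl rkV rkB).Feasible f)
    (hstab : (IPrime r s cl rkV rkB).Stable f) :
    (∀ i : Fin r,
        (f (Sum.inl (true, Sum.inl i)) = some 0 ∧ f (Sum.inl (false, Sum.inl i)) = some 3) ∨
        (f (Sum.inl (false, Sum.inl i)) = some 0 ∧ f (Sum.inl (true, Sum.inl i)) = some 3)) ∧
    (f (Sum.inr (Sum.inr 0)) = some 1) ∧
    (∀ (pol : Bool) (i : Fin r), f (Sum.inl (pol, Sum.inr i)) = some 0) ∧
    (∀ j : Fin s, f (Sum.inr (Sum.inl j)) = some 0 ↔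
        (Finset.univ.filter fun z : Fin 3 => f (Sum.inl (cl j z)) = some 0).card = 2) := by
  classical
  have hdd1 : f (Sum.inr (Sum.inr 0)) = some 1 := dd_at_w hM hfeas hstab hB
  have hdd0 : f (Sum.inr (Sum.inr 0)) ≠ some 0 := by rw [hdd1]; simp
  have hdd3 : f (Sum.inr (Sum.inr 0)) ≠ some 3 := by rw [hdd1]; simp
  refine ⟨?_, hdd1, ?_, ?_⟩
  · -- (1) each variable gadget
    intro i
    have hF1 := F1 (f := f) hfeas i
    have hF4 := F4 (f := f) hfeas i
    rw [χ_zero hdd0] at hF1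
    rw [χ_zero hdd3] at hF4
    rcases χ_cases (f := f) (Sum.inl (true, Sum.inl i)) 0 with ⟨e1, h1⟩ | ⟨e1, h1⟩
    · left
      refine ⟨h1, ?_⟩
      have e3 : χ f (Sum.inl (true, Sum.inl i)) 3 = 0 := χ_zero (by rw [h1]; simp)
      rcases χ_cases (f := f) (Sum.inl (false, Sum.inl i)) 3 with ⟨e4, h4⟩ | ⟨e4, h4⟩
      · exact h4
      · omega
    · right
      have e2 : χ f (Sum.inl (false, Sum.inl i)) 0 = 1 := by omega
      rcases χ_cases (f := f) (Sum.inl (false, Sum.inl i)) 0 with ⟨e2', h2⟩ | ⟨e2', h2⟩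
      swap
      · omega
      refine ⟨h2, ?_⟩
      have e3 : χ f (Sum.inl (false, Sum.inl i)) 3 = 0 := χ_zero (by rw [h2]; simp)
      rcases χ_cases (f := f) (Sum.inl (true, Sum.inl i)) 3 with ⟨e4, h4⟩ | ⟨e4, h4⟩
      · exact h4
      · omega
  · -- (3) Y-literal students are all at v
    intro pol i
    have hF2 := F2 (f := f) hfeas i
    rw [χ_zero hdd0] at hF2
    rcases χ_cases (f := f) (Sum.inl (true, Sum.inr i)) 0 with ⟨e1, h1⟩ | ⟨e1, h1⟩ <;>
      rcases χ_cases (f := f) (Sum.inl (false, Sum.inr i)) 0 with ⟨e2, h2⟩ | ⟨e2, h2⟩ <;>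
        rcases pol <;> first | assumption | omega
  · -- (4) clause students
    intro j
    have hF3 := F3 (f := f) hdist hfeas j
    rw [χ_zero hdd0] at hF3
    have hcard : (Finset.univ.filter fun z : Fin 3 => f (Sum.inl (cl j z)) = some 0).card
        = ∑ z : Fin 3, χ f (Sum.inl (cl j z)) 0 := by
      rw [Finset.card_filter]
      refine Finset.sum_congr rfl (fun z _ => ?_)
      by_cases hz : f (Sum.inl (cl j z)) = some 0
      · rw [if_pos hz, χ_one hz]
      · rw [if_neg hz, χ_zero hz]
    constructor
    · intro hj
      rw [hcard]
      rw [χ_one hj] at hF3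
      omega
    · intro hc
      rw [hcard] at hc
      rcases χ_cases (f := f) (Sum.inr (Sum.inl j)) 0 with ⟨e1, h1⟩ | ⟨e1, h1⟩
      · exact h1
      · omega
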